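/- Let Γ be a locally rectifiable Jordan curve, w ∉ Γ with δ(w) = dist(w,Γ), and 1 < p < 2. Write Γ_{2w} = Γ ∩ B(w, 2δ(w)) and F(z) = (w−z)^{-1}. Then ‖F‖_{B_p(Γ)}^p ≥ c δ(w)^{-p-2} ℓ(Γ_{2w})², where c depends only on p. Consequently, if ‖F‖_{B_p(Γ)}^p ≤ M δ(w)^{-p} then ℓ(Γ_{2w}) ≤ (M/c)^{1/2} δ(w). -/

import Mathlib

open MeasureTheory Complex Set Metric
open scoped ENNReal Real

noncomputable section

/-- `γ : ℝ → ℂ` is an (injective) arc-length parametrization: the arc length of `γ` over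
`[s, t]` equals `t - s`. Its range is then a locally rectifiable Jordan curve through `∞`. -/
def IsArcLengthParam (γ : ℝ → ℂ) : Prop :=
  Function.Injective γ ∧
    ∀ s t : ℝ, s ≤ t → eVariationOn γ (Set.Icc s t) = ENNReal.ofReal (t - s)

/-- The boundary Besov `p`-norm (to the `p`-th power) of the test function
`F(z) = (w - z)⁻¹` on the curve parametrized by arc length by `γ`:
`‖F‖_{B_p(Γ)}^p = ∫_Γ ∫_Γ |F(ζ) - F(η)|^p |ζ - η|^{-2} |dζ| |dη|`. -/
def besovTest (p : ℝ) (γ : ℝ → ℂ) (w : ℂ) : ℝ≥0∞ :=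
  ∫⁻ s : ℝ, ∫⁻ t : ℝ,
    ENNReal.ofReal (‖(w - γ s)⁻¹ - (w - γ t)⁻¹‖ ^ p * dist (γ s) (γ t) ^ (-2 : ℝ))

lemma pointwise_bound (p : ℝ) (hp1 : 1 < p) (hp2 : p < 2) {w a b : ℂ} {d : ℝ} (hd : 0 < d)
    (ha : dist a w < 2 * d) (hb : dist b w < 2 * d) (haw : a ≠ w) (hbw : b ≠ w) (hab : a ≠ b) :
    (1/16 : ℝ) * d ^ (-p - 2) ≤ ‖(w - a)⁻¹ - (w - b)⁻¹‖ ^ p * dist a b ^ (-2 : ℝ) := by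
  have hwa : w - a ≠ 0 := sub_ne_zero.mpr haw.symm
  have hwb : w - b ≠ 0 := sub_ne_zero.mpr hbw.symm
  set A := ‖w - a‖ with hA
  set B := ‖w - b‖ with hB
  set r := dist a b with hrdef
  have hA0 : 0 < A := norm_pos_iff.mpr hwa
  have hB0 : 0 < B := norm_pos_iff.mpr hwb
  have hA2 : A ≤ 2 * d := by
    have : A = dist a w := by rw [hA, dist_eq_norm, ← norm_neg]; ring_nf
    rw [this]; exact ha.le
  have hB2 : B ≤ 2 * d := by
    have : B = dist b w := by rw [hB, dist_eq_norm, ← norm_neg]; ring_nf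
    rw [this]; exact hb.le
  have hr0 : 0 < r := dist_pos.mpr hab
  have hr4 : r ≤ 4 * d := by
    have := dist_triangle a w b
    have h2 : dist w b = dist b w := dist_comm w b
    linarith
  have heq : (w - a)⁻¹ - (w - b)⁻¹ = (a - b) / ((w - a) * (w - b)) := by
    field_simp
    ring
  have hnorm : ‖(w - a)⁻¹ - (w - b)⁻¹‖ = r / (A * B) := by
    rw [heq, norm_div, norm_mul, ← hA, ← hB, hrdef, dist_eq_norm]
  rw [hnorm]
  have hAB : A * B ≤ 4 * d ^ 2 := by nlinarith
  have hAB0 : 0 < A * B := mul_pos hA0 hB0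
  have hp0 : (0:ℝ) ≤ p := by linarith
  have step1 : (r / (4 * d ^ 2)) ^ p ≤ (r / (A * B)) ^ p := by
    gcongr
  have step3 : (4 * d) ^ (p - 2) ≤ r ^ (p - 2) :=
    Real.rpow_le_rpow_of_nonpos hr0 hr4 (by linarith)
  have step2 : (r / (4 * d ^ 2)) ^ p * r ^ (-2 : ℝ) = r ^ (p - 2) * (4 * d ^ 2) ^ (-p) := by
    rw [Real.div_rpow hr0.le (by positivity), div_eq_mul_inv, ← Real.rpow_neg (by positivity),
      mul_right_comm, ← Real.rpow_add hr0]
    ring_nf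
  have step4 : (4 * d) ^ (p - 2) * (4 * d ^ 2) ^ (-p) = (1/16 : ℝ) * d ^ (-p - 2) := by
    rw [Real.mul_rpow (by norm_num) hd.le, Real.mul_rpow (by norm_num) (by positivity),
      ← Real.rpow_natCast d 2, ← Real.rpow_mul hd.le,
      show ((2:ℕ):ℝ) = 2 by norm_num,
      mul_mul_mul_comm, ← Real.rpow_add (by norm_num : (0:ℝ) < 4), ← Real.rpow_add hd,
      show p - 2 + -p = (-2:ℝ) by ring, show p - 2 + 2 * -p = -p - 2 by ring,
      show (-2:ℝ) = ((-2:ℤ):ℝ) by norm_num, Real.rpow_intCast]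
    norm_num
  calc (1/16 : ℝ) * d ^ (-p - 2) = (4 * d) ^ (p - 2) * (4 * d ^ 2) ^ (-p) := step4.symm
    _ ≤ r ^ (p - 2) * (4 * d ^ 2) ^ (-p) :=
        mul_le_mul_of_nonneg_right step3 (Real.rpow_nonneg (by positivity) _)
    _ = (r / (4 * d ^ 2)) ^ p * r ^ (-2 : ℝ) := step2.symm
    _ ≤ (r / (A * B)) ^ p * r ^ (-2 : ℝ) :=
        mul_le_mul_of_nonneg_right step1 (Real.rpow_nonneg hr0.le _)

/-- For `1 < p < 2`, `w ∉ Γ`, `F(z) = (w-z)⁻¹` and `Γ_{2w} = Γ ∩ B(w, 2δ(w))`: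
`‖F‖_{B_p(Γ)}^p ≥ c δ(w)^{-p-2} ℓ(Γ_{2w})²` with `c = c(p) > 0`; consequently
`‖F‖_{B_p(Γ)}^p ≤ M δ(w)^{-p}` implies `ℓ(Γ_{2w}) ≤ √(M/c) δ(w)`. -/
theorem statement15 (p : ℝ) (hp1 : 1 < p) (hp2 : p < 2) :
    ∃ c : ℝ, 0 < c ∧
      ∀ (γ : ℝ → ℂ) (w : ℂ) (d : ℝ),
        IsArcLengthParam γ → w ∉ Set.range γ →
        d = Metric.infDist w (Set.range γ) → 0 < d →
        (ENNReal.ofReal (c * d ^ (-p - 2)) *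
            volume (γ ⁻¹' Metric.ball w (2 * d)) ^ 2 ≤ besovTest p γ w) ∧
        (∀ M : ℝ, 0 < M → besovTest p γ w ≤ ENNReal.ofReal (M * d ^ (-p)) →
          volume (γ ⁻¹' Metric.ball w (2 * d)) ≤
            ENNReal.ofReal (Real.sqrt (M / c) * d)) := by
  refine ⟨1/16, by norm_num, fun γ w d hγ hw hd hd0 => ?_⟩
  set E := γ ⁻¹' Metric.ball w (2 * d) with hE
  set K := ENNReal.ofReal ((1/16 : ℝ) * d ^ (-p - 2)) with hK
  -- γ is 1-Lipschitz
  have hLip : LipschitzWith 1 γ := by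
    apply LipschitzWith.of_edist_le
    intro s t
    rcases le_total s t with h | h
    · rw [edist_comm (γ s), edist_comm s]
      calc edist (γ t) (γ s) ≤ eVariationOn γ (Set.Icc s t) :=
            eVariationOn.edist_le γ (Set.right_mem_Icc.mpr h) (Set.left_mem_Icc.mpr h)
        _ = ENNReal.ofReal (t - s) := hγ.2 s t h
        _ = edist t s := by rw [edist_dist, Real.dist_eq, _root_.abs_of_nonneg (by linarith)]
    · calc edist (γ s) (γ t) ≤ eVariationOn γ (Set.Icc t s) :=
            eVariationOn.edist_le γ (Set.right_mem_Icc.mpr h) (Set.left_mem_Icc.mpr h)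
        _ = ENNReal.ofReal (s - t) := hγ.2 t s h
        _ = edist s t := by rw [edist_dist, Real.dist_eq, _root_.abs_of_nonneg (by linarith)]
  have hE_meas : MeasurableSet E := hLip.continuous.measurable measurableSet_ball
  set f : ℝ → ℝ → ℝ≥0∞ := fun s t =>
    ENNReal.ofReal (‖(w - γ s)⁻¹ - (w - γ t)⁻¹‖ ^ p * dist (γ s) (γ t) ^ (-2 : ℝ)) with hf
  have hKf : ∀ s ∈ E, ∀ t ∈ E, t ≠ s → K ≤ f s t := by
    intro s hs t ht hts
    apply ENNReal.ofReal_le_ofReal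
    exact pointwise_bound p hp1 hp2 hd0 (by simpa [hE, Metric.mem_ball] using hs)
      (by simpa [hE, Metric.mem_ball] using ht)
      (fun h => hw ⟨s, h⟩) (fun h => hw ⟨t, h⟩)
      (fun h => hts (hγ.1 h).symm)
  have inner : ∀ s ∈ E, K * volume E ≤ ∫⁻ t in E, f s t := by
    intro s hs
    rw [← setLIntegral_const E K]
    apply lintegral_mono_ae
    have h2 : ∀ᵐ t : ℝ, t ≠ s := by
      rw [ae_iff]
      simpa using measure_singleton (α := ℝ) s
    filter_upwards [ae_restrict_mem hE_meas, ae_restrict_of_ae h2] with t ht hts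
    exact hKf s hs t ht hts
  have part1 : K * volume E ^ 2 ≤ besovTest p γ w := by
    calc K * volume E ^ 2 = K * volume E * volume E := by rw [sq, mul_assoc]
      _ = ∫⁻ _ in E, K * volume E := (setLIntegral_const E _).symm
      _ ≤ ∫⁻ s in E, ∫⁻ t in E, f s t := by
          apply lintegral_mono_ae
          filter_upwards [ae_restrict_mem hE_meas] with s hs
          exact inner s hs
      _ ≤ ∫⁻ s in E, ∫⁻ t, f s t :=
          lintegral_mono fun s => setLIntegral_le_lintegral E _
      _ ≤ ∫⁻ s, ∫⁻ t, f s t := setLIntegral_le_lintegral E _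
      _ = besovTest p γ w := rfl
  refine ⟨part1, fun M hM hbes => ?_⟩
  have hK0 : K ≠ 0 := by
    rw [hK]
    simp only [ne_eq, ENNReal.ofReal_eq_zero, not_le]
    positivity
  have hKt : K ≠ ⊤ := ENNReal.ofReal_ne_top
  have h1 : volume E ^ 2 ≤ ENNReal.ofReal (M * d ^ (-p)) / K := by
    rw [ENNReal.le_div_iff_mul_le (Or.inl hK0) (Or.inl hKt), mul_comm]
    exact part1.trans hbes
  have hMc : (0:ℝ) ≤ M / (1/16 : ℝ) := by positivity
  have h2 : ENNReal.ofReal (M * d ^ (-p)) / K = ENNReal.ofReal (Real.sqrt (M / (1/16)) * d) ^ 2 := by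
    rw [hK, ← ENNReal.ofReal_div_of_pos (by positivity),
      ← ENNReal.ofReal_pow (by positivity)]
    congr 1
    rw [mul_pow, Real.sq_sqrt hMc]
    have hdp : d ^ (-p) = d ^ (-p-2) * d ^ (2:ℕ) := by
      rw [← Real.rpow_natCast d 2, ← Real.rpow_add hd0]
      norm_num
    rw [hdp]
    have hne : d ^ (-p-2:ℝ) ≠ 0 := ne_of_gt (Real.rpow_pos_of_pos hd0 _)
    field_simp
  by_contra hcon
  push_neg at hcon
  have := ENNReal.pow_lt_pow_left (n := 2) (by norm_num) hcon
  rw [← h2] at this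
  exact absurd h1 (not_le.mpr this)
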